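/- The deterministic forward–backward system μ'(t) = −w_t^{−2}·h(t), h'(t) = 0 on [0,T] with boundary conditions μ(0) = 0 and h(T) = g(μ(T)) has exactly three solutions, namely (μ(t), h(t)) = (−A·k_t, A) for A ∈ {−1, 0, 1}. -/

import Mathlib

open Set MeasureTheory intervalIntegral

/-- The deterministic forward–backward system `μ' = −w⁻²·h`, `h' = 0` on `[0,T]`
with `μ(0) = 0`, `h(T) = g(μ(T))` has exactly three solutions, namely
`(μ(t), h(t)) = (−A·k_t, A)` for `A ∈ {−1, 0, 1}`. -/
theorem fbsde_no_common_noise_three_solutions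
    (T κ δ : ℝ) (hT : 0 < T) (hδ : δ ∈ Set.Ioo 0 T)
    (η w r k g : ℝ → ℝ)
    (hη : ∀ t ∈ Set.Icc (0:ℝ) T,
      HasDerivWithinAt η (η t ^ 2 - 2 * κ * η t - 1) (Set.Icc (0:ℝ) T) t)
    (hηT : η T = 1)
    (hw : ∀ t, w t = Real.exp (∫ s in t..T, (-κ + η s)))
    (hr : ∀ t, r t = ∫ s in t..T, ((w s) ^ 2)⁻¹)
    (hk : ∀ t, k t = ∫ s in (0:ℝ)..t, ((w s) ^ 2)⁻¹)
    (hrδ : 0 < r δ)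
    (hg : ∀ x, g x = if |x| ≤ r δ then -x / r δ else -Real.sign x) :
    (∀ A ∈ ({-1, 0, 1} : Set ℝ),
      (∀ t ∈ Set.Icc (0:ℝ) T,
        HasDerivWithinAt (fun s => -A * k s) (-((w t) ^ 2)⁻¹ * A) (Set.Icc (0:ℝ) T) t) ∧
      -A * k 0 = 0 ∧ A = g (-A * k T)) ∧
    (∀ μ h : ℝ → ℝ,
      (∀ t ∈ Set.Icc (0:ℝ) T,
        HasDerivWithinAt μ (-((w t) ^ 2)⁻¹ * h t) (Set.Icc (0:ℝ) T) t) →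
      (∀ t ∈ Set.Icc (0:ℝ) T, HasDerivWithinAt h 0 (Set.Icc (0:ℝ) T) t) →
      μ 0 = 0 → h T = g (μ T) →
      ∃ A ∈ ({-1, 0, 1} : Set ℝ),
        ∀ t ∈ Set.Icc (0:ℝ) T, μ t = -A * k t ∧ h t = A) := by
  obtain ⟨hδ0, hδT⟩ := hδ
  have huIcc : Set.uIcc (0:ℝ) T = Set.Icc 0 T := Set.uIcc_of_le hT.le
  set F : ℝ → ℝ := fun s => ((w s) ^ 2)⁻¹ with hF
  -- continuity of η and the drift
  have hηc : ContinuousOn η (Set.Icc 0 T) := fun t ht => (hη t ht).continuousWithinAt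
  have haux : ContinuousOn (fun s => -κ + η s) (Set.Icc (0:ℝ) T) :=
    continuousOn_const.add hηc
  have hauxint : MeasureTheory.IntegrableOn (fun s => -κ + η s) (Set.uIcc (0:ℝ) T) := by
    rw [huIcc]; exact haux.integrableOn_compact isCompact_Icc
  -- continuity of w and F
  have hwc : ContinuousOn w (Set.Icc (0:ℝ) T) := by
    have h1 := intervalIntegral.continuousOn_primitive_interval_left
      (f := fun s => -κ + η s) (μ := MeasureTheory.volume) (a := 0) (b := T) hauxint
    rw [huIcc] at h1
    exact (Real.continuous_exp.comp_continuousOn h1).congr fun t _ => hw t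
  have hwpos : ∀ s, 0 < w s := fun s => (hw s) ▸ Real.exp_pos _
  have hFpos : ∀ s, 0 < F s := fun s => inv_pos.mpr (pow_pos (hwpos s) 2)
  have hFc : ContinuousOn F (Set.Icc (0:ℝ) T) :=
    (hwc.pow 2).inv₀ fun s _ => (pow_pos (hwpos s) 2).ne'
  have hFint : ∀ a b : ℝ, a ∈ Set.Icc (0:ℝ) T → b ∈ Set.Icc (0:ℝ) T →
      IntervalIntegrable F MeasureTheory.volume a b := by
    intro a b ha hb
    apply ContinuousOn.intervalIntegrable
    apply hFc.mono
    rw [← huIcc]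
    exact Set.uIcc_subset_uIcc (by rw [huIcc]; exact ha) (by rw [huIcc]; exact hb)
  have h0mem : (0:ℝ) ∈ Set.Icc (0:ℝ) T := Set.left_mem_Icc.mpr hT.le
  have hTmem : T ∈ Set.Icc (0:ℝ) T := Set.right_mem_Icc.mpr hT.le
  have hδmem : δ ∈ Set.Icc (0:ℝ) T := ⟨hδ0.le, hδT.le⟩
  have hkfun : k = fun t => ∫ s in (0:ℝ)..t, F s := funext hk
  have hk0 : k 0 = 0 := by rw [hk]; exact intervalIntegral.integral_same
  -- derivative of k
  have hkd : ∀ t ∈ Set.Icc (0:ℝ) T, HasDerivWithinAt k (F t) (Set.Icc (0:ℝ) T) t := by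
    intro t ht
    rw [hkfun]
    rcases eq_or_lt_of_le ht.2 with hteT | htltT
    · subst hteT
      have hmem : Set.Icc (0:ℝ) t ∈ nhdsWithin t (Set.Iic t) :=
        Filter.mem_of_superset (Icc_mem_nhdsLE_of_mem ⟨hT, le_refl t⟩) le_rfl
      have hmeas : StronglyMeasurableAtFilter F (nhdsWithin t (Set.Iic t))
          MeasureTheory.volume :=
        ⟨Set.Icc 0 t, hmem, hFc.aestronglyMeasurable measurableSet_Icc⟩
      have hb : ContinuousWithinAt F (Set.Iic t) t := (hFc t ht).mono_of_mem_nhdsWithin hmem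
      exact (intervalIntegral.integral_hasDerivWithinAt_right (hFint 0 t h0mem ht)
        hmeas hb).mono Set.Icc_subset_Iic_self
    rcases eq_or_lt_of_le ht.1 with ht0 | ht0
    · subst ht0
      have hmem : Set.Icc (0:ℝ) T ∈ nhdsWithin 0 (Set.Ioi 0) :=
        Filter.mem_of_superset (Ioc_mem_nhdsGT_of_mem ⟨le_refl 0, hT⟩)
          Set.Ioc_subset_Icc_self
      have hmeas : StronglyMeasurableAtFilter F (nhdsWithin 0 (Set.Ioi 0))
          MeasureTheory.volume :=
        ⟨Set.Icc 0 T, hmem, hFc.aestronglyMeasurable measurableSet_Icc⟩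
      have hb : ContinuousWithinAt F (Set.Ioi 0) 0 := (hFc 0 ht).mono_of_mem_nhdsWithin hmem
      exact (intervalIntegral.integral_hasDerivWithinAt_right (hFint 0 0 h0mem ht)
        hmeas hb).mono Set.Icc_subset_Ici_self
    · have hmem : Set.Icc (0:ℝ) T ∈ nhds t := Icc_mem_nhds ht0 htltT
      have hmeas : StronglyMeasurableAtFilter F (nhds t) MeasureTheory.volume :=
        ⟨Set.Icc 0 T, hmem, hFc.aestronglyMeasurable measurableSet_Icc⟩
      have hb : ContinuousAt F t := (hFc t ht).continuousAt hmem
      exact (intervalIntegral.integral_hasDerivAt_right (hFint 0 t h0mem ht)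
        hmeas hb).hasDerivWithinAt
  -- derivative of the candidate solutions
  have hAd : ∀ A : ℝ, ∀ t ∈ Set.Icc (0:ℝ) T,
      HasDerivWithinAt (fun s => -A * k s) (-((w t) ^ 2)⁻¹ * A) (Set.Icc (0:ℝ) T) t := by
    intro A t ht
    have h1 := (hkd t ht).const_mul (-A)
    rw [show -((w t) ^ 2)⁻¹ * A = -A * F t by simp only [hF]; ring]
    exact h1
  -- key inequality r δ < k T
  have hsplit : (∫ s in (0:ℝ)..δ, F s) + (∫ s in δ..T, F s) = ∫ s in (0:ℝ)..T, F s :=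
    intervalIntegral.integral_add_adjacent_intervals (hFint 0 δ h0mem hδmem)
      (hFint δ T hδmem hTmem)
  have hpos0δ : 0 < ∫ s in (0:ℝ)..δ, F s :=
    intervalIntegral.intervalIntegral_pos_of_pos_on (hFint 0 δ h0mem hδmem)
      (fun x _ => hFpos x) hδ0
  have hrk : r δ < k T := by
    rw [hr, hk]
    have : (∫ s in δ..T, ((w s) ^ 2)⁻¹) = ∫ s in δ..T, F s := rfl
    rw [this]
    show (∫ s in δ..T, F s) < ∫ s in (0:ℝ)..T, F s
    rw [← hsplit]
    linarith
  have hkT : 0 < k T := lt_trans hrδ hrk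
  -- values of g
  have hgkT : g (k T) = -1 := by
    rw [hg, if_neg (not_le.mpr (by rwa [abs_of_pos hkT])), Real.sign_of_pos hkT]
  have hgnkT : g (-(k T)) = 1 := by
    rw [hg, if_neg (not_le.mpr (by rwa [abs_neg, abs_of_pos hkT])),
      Real.sign_of_neg (neg_lt_zero.mpr hkT)]
    norm_num
  constructor
  · -- part 1
    intro A hA
    refine ⟨hAd A, by rw [hk0]; ring, ?_⟩
    simp only [Set.mem_insert_iff, Set.mem_singleton_iff] at hA
    rcases hA with rfl | rfl | rfl
    · rw [show -(-1 : ℝ) * k T = k T by ring, hgkT]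
    · rw [show -(0 : ℝ) * k T = 0 by ring, hg]
      simp [hrδ.le]
    · rw [show -(1 : ℝ) * k T = -(k T) by ring, hgnkT]
  · -- part 2
    intro μ h hμd hhd hμ0 hhT
    set A := h T with hAdef
    have hmemIci : ∀ x ∈ Set.Ico (0:ℝ) T, Set.Icc (0:ℝ) T ∈ nhdsWithin x (Set.Ici x) := by
      intro x hx
      exact Filter.mem_of_superset (Icc_mem_nhdsGE_of_mem ⟨le_refl x, hx.2⟩)
        (Set.Icc_subset_Icc hx.1 le_rfl)
    have hconst : ∀ t ∈ Set.Icc (0:ℝ) T, h t = h 0 := by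
      apply eq_of_has_deriv_right_eq (f' := fun _ => (0:ℝ)) (a := 0) (b := T)
      · intro x hx
        exact (hhd x (Set.Ico_subset_Icc_self hx)).mono_of_mem_nhdsWithin (hmemIci x hx)
      · intro x hx
        exact hasDerivWithinAt_const x _ (h 0)
      · exact fun t ht => (hhd t ht).continuousWithinAt
      · exact continuousOn_const
      · rfl
    have hA' : ∀ t ∈ Set.Icc (0:ℝ) T, h t = A := by
      intro t ht
      rw [hconst t ht, hAdef, hconst T hTmem]
    have hμeq : ∀ t ∈ Set.Icc (0:ℝ) T, μ t = -A * k t := by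
      apply eq_of_has_deriv_right_eq (f' := fun x => -((w x) ^ 2)⁻¹ * A) (a := 0) (b := T)
      · intro x hx
        have h1 := hμd x (Set.Ico_subset_Icc_self hx)
        rw [hA' x (Set.Ico_subset_Icc_self hx)] at h1
        exact h1.mono_of_mem_nhdsWithin (hmemIci x hx)
      · intro x hx
        exact (hAd A x (Set.Ico_subset_Icc_self hx)).mono_of_mem_nhdsWithin (hmemIci x hx)
      · exact fun t ht => (hμd t ht).continuousWithinAt
      · exact fun t ht => (hAd A t ht).continuousWithinAt
      · rw [hμ0, hk0]; ring
    have hμT : μ T = -A * k T := hμeq T hTmem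
    have hAg : A = g (-A * k T) := by rw [← hμT]; exact hhT
    have hAval : A = -1 ∨ A = 0 ∨ A = 1 := by
      rw [hg] at hAg
      by_cases hcase : |(-A * k T)| ≤ r δ
      · rw [if_pos hcase] at hAg
        have h2 : A * r δ = -(-A * k T) := (eq_div_iff hrδ.ne').mp hAg
        have h3 : A * (k T - r δ) = 0 := by nlinarith [h2]
        rcases mul_eq_zero.mp h3 with h4 | h4
        · exact Or.inr (Or.inl h4)
        · exact absurd h4 (sub_ne_zero.mpr hrk.ne')
      · rw [if_neg hcase] at hAg
        rcases lt_trichotomy A 0 with hA0 | hA0 | hA0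
        · left
          rw [Real.sign_of_pos (mul_pos (neg_pos.mpr hA0) hkT)] at hAg
          exact hAg
        · exfalso
          apply hcase
          rw [hA0]
          simp [hrδ.le]
        · right; right
          rw [Real.sign_of_neg (by nlinarith : -A * k T < 0)] at hAg
          simpa using hAg
    refine ⟨A, ?_, fun t ht => ⟨hμeq t ht, hA' t ht⟩⟩
    simp only [Set.mem_insert_iff, Set.mem_singleton_iff]
    exact hAval
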